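/- Let 0<p<q, p+q=1. The quartic q⁴ + q²(1+4pq)z + (1+2pq+6p²q²)z² + p²(1+4pq)z³ + p⁴z⁴ has exactly two roots of modulus < 1 and two roots of modulus > 1 (the roots come in the complex-conjugate pairs z₁, z̄₁ and z₄, z̄₄ given by z = (−1 ∓ i√3 − 4pq ± √(−2 ± 2i√3 + 8(1±i√3)pq))/(4p²)), and in particular it has no root on the unit circle. -/

import Mathlib

open Complex

set_option maxHeartbeats 1600000

/-- The quartic `q⁴ + q²(1+4pq)z + (1+2pq+6p²q²)z² + p²(1+4pq)z³ + p⁴z⁴`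
has its four roots in two complex-conjugate pairs, one pair of modulus `< 1`
and one pair of modulus `> 1`; in particular it has no root on the unit
circle. -/
theorem stmt_13 (p q : ℝ) (hp : 0 < p) (hpq : p < q) (hsum : p + q = 1)
    (Q : ℂ → ℂ)
    (hQ : ∀ z, Q z = (q : ℂ) ^ 4 + (q : ℂ) ^ 2 * (1 + 4 * p * q) * z
      + (1 + 2 * (p : ℂ) * q + 6 * (p : ℂ) ^ 2 * (q : ℂ) ^ 2) * z ^ 2
      + (p : ℂ) ^ 2 * (1 + 4 * (p : ℂ) * q) * z ^ 3 + (p : ℂ) ^ 4 * z ^ 4) :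
    (∃ z₁ z₄ : ℂ, z₁.im ≠ 0 ∧ z₄.im ≠ 0 ∧ ‖z₁‖ < 1 ∧ 1 < ‖z₄‖ ∧
      ∀ z : ℂ, Q z = 0 ↔
        z = z₁ ∨ z = (starRingEnd ℂ) z₁ ∨ z = z₄ ∨ z = (starRingEnd ℂ) z₄) ∧
    ∀ z : ℂ, ‖z‖ = 1 → Q z ≠ 0 := by
  have hq : 0 < q := hp.trans hpq
  have hpC : (p : ℂ) ≠ 0 := by exact_mod_cast hp.ne'
  have hs3 : Real.sqrt 3 ^ 2 = 3 := Real.sq_sqrt (by norm_num)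
  have hs3pos : 0 < Real.sqrt 3 := Real.sqrt_pos.2 (by norm_num)
  obtain ⟨a, hare, haim⟩ : ∃ a : ℂ, a.re = (1 + 4*p*q)/2 ∧ a.im = Real.sqrt 3 / 2 :=
    ⟨⟨(1 + 4*p*q)/2, Real.sqrt 3 / 2⟩, rfl, rfl⟩
  have haI : a = (1 + 4*(p:ℂ)*(q:ℂ))/2 + ((Real.sqrt 3 : ℝ):ℂ)/2 * I := by
    rw [← re_add_im a, hare, haim]; push_cast; ring
  have hconjI : (starRingEnd ℂ) a = (1 + 4*(p:ℂ)*(q:ℂ))/2 - ((Real.sqrt 3 : ℝ):ℂ)/2 * I := by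
    rw [← re_add_im ((starRingEnd ℂ) a), Complex.conj_re, Complex.conj_im, hare, haim]
    push_cast; ring
  have hs3C : ((Real.sqrt 3 : ℝ):ℂ)^2 = 3 := by exact_mod_cast congrArg (Complex.ofReal) hs3
  have ha1 : a + (starRingEnd ℂ) a = 1 + 4*(p:ℂ)*(q:ℂ) := by
    rw [hconjI, haI]; ring
  have ha2 : a * (starRingEnd ℂ) a = 1 + 2*(p:ℂ)*(q:ℂ) + 4*(p:ℂ)^2*(q:ℂ)^2 := by
    rw [hconjI, haI]
    linear_combination (-(3:ℂ)/4) * Complex.I_sq + (-(1:ℂ)/4) * I^2 * hs3C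
  -- factorization of Q
  have hfact : ∀ z : ℂ, Q z =
      ((p:ℂ)^2 * z^2 + a * z + (q:ℂ)^2) * ((p:ℂ)^2 * z^2 + (starRingEnd ℂ) a * z + (q:ℂ)^2) := by
    intro z
    rw [hQ]
    linear_combination (-((p:ℂ)^2*z^3 + (q:ℂ)^2*z)) * ha1 + (-z^2) * ha2
  -- square root of the discriminant
  obtain ⟨d, hd⟩ : ∃ d : ℂ, d^2 = a^2 - 4*(p:ℂ)^2*(q:ℂ)^2 :=
    IsAlgClosed.exists_pow_nat_eq _ two_pos
  -- normSq computations
  have hnsa : Complex.normSq a = 1 + 2*p*q + 4*p^2*q^2 := by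
    rw [Complex.normSq_apply, hare, haim]
    linear_combination ((1:ℝ)/4) * hs3
  have hnsd : Complex.normSq d ^ 2 = 16*(p*q)^2 + 4*(p*q) + 1 := by
    have h1 : Complex.normSq (d^2) = Complex.normSq d ^ 2 := by rw [map_pow]
    rw [← h1, hd]
    have h2 : a^2 - 4*(p:ℂ)^2*(q:ℂ)^2 =
        ((((1+4*p*q)/2)^2 - 3/4 - 4*p^2*q^2 : ℝ) : ℂ) +
        ((Real.sqrt 3 * ((1+4*p*q)/2) : ℝ) : ℂ) * I := by
      rw [haI]; push_cast
      linear_combination ((3:ℂ)/4) * Complex.I_sq + ((1:ℂ)/4) * I^2 * hs3C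
    rw [h2, Complex.normSq_add_mul_I]
    linear_combination (((1+4*p*q)/2)^2) * hs3
  have hnd_pos : 0 < Complex.normSq d := by
    rcases (Complex.normSq_nonneg d).lt_or_eq with h | h
    · exact h
    · exfalso; nlinarith [hnsd, mul_pos hp hq]
  -- Sigma inequality
  have hu : 0 < p*q := mul_pos hp hq
  have hu4 : p*q < 1/4 := by nlinarith [sq_nonneg (p - q)]
  have hSigma : 2*(Complex.normSq a + Complex.normSq d) > 4*(p^4 + q^4) := by
    have key : Complex.normSq d > 1 - 10*(p*q) := by
      nlinarith [hnsd, hnd_pos, hu, hu4]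
    have hpq4 : p^4 + q^4 = 1 - 4*(p*q) + 2*(p*q)^2 := by
      linear_combination ((p+q+1)*((p+q)^2+1-4*p*q)) * hsum
    nlinarith [key, hnsa, hpq4, hu]
  -- parallelogram and product
  have hpar : ∀ e : ℂ, e^2 = a^2 - 4*(p:ℂ)^2*(q:ℂ)^2 →
      ‖a+e‖^2 + ‖a-e‖^2 = 2*(Complex.normSq a + Complex.normSq e) := by
    intro e _
    rw [Complex.sq_norm, Complex.sq_norm]
    simp [Complex.normSq_apply, Complex.add_re, Complex.add_im, Complex.sub_re, Complex.sub_im]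
    ring
  have hprod : ∀ e : ℂ, e^2 = a^2 - 4*(p:ℂ)^2*(q:ℂ)^2 →
      ‖a+e‖ * ‖a-e‖ = 4*p^2*q^2 := by
    intro e he
    rw [← norm_mul]
    have h3 : (a+e)*(a-e) = ((4*p^2*q^2 : ℝ) : ℂ) := by
      push_cast; linear_combination -he
    rw [h3, Complex.norm_real, Real.norm_eq_abs]
    exact abs_of_nonneg (by positivity)
  have hnsd' : ∀ e : ℂ, e^2 = a^2 - 4*(p:ℂ)^2*(q:ℂ)^2 → Complex.normSq e = Complex.normSq d := by
    intro e he
    have : Complex.normSq e ^ 2 = Complex.normSq d ^ 2 := by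
      rw [← map_pow, ← map_pow, he, hd]
    have h1 := Complex.normSq_nonneg e
    have h2 := Complex.normSq_nonneg d
    nlinarith [this]
  -- one of |a+d|, |a-d| exceeds 2q²
  have hdisj : 2*q^2 < ‖a+d‖ ∨ 2*q^2 < ‖a-d‖ := by
    by_contra hcon
    push_neg at hcon
    obtain ⟨h1, h2⟩ := hcon
    set M := ‖a+d‖ with hM
    set m := ‖a-d‖ with hm
    have hMn : 0 ≤ M := norm_nonneg _
    have hmn : 0 ≤ m := norm_nonneg _
    have hMm : M * m = 4*p^2*q^2 := hprod d hd
    have hMpos : 0 < M := by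
      rcases hMn.lt_or_eq with h | h; exact h
      exfalso; nlinarith [hMm, mul_pos (mul_pos hp hp) (mul_pos hq hq)]
    have hmpos : 0 < m := by
      rcases hmn.lt_or_eq with h | h; exact h
      exfalso; nlinarith [hMm, mul_pos (mul_pos hp hp) (mul_pos hq hq)]
    have hM2 : 2*p^2 ≤ M := by nlinarith [hMm, h2, hmpos, sq_nonneg (p-q)]
    have hm2 : 2*p^2 ≤ m := by nlinarith [hMm, h1, hMpos, sq_nonneg (p-q)]
    have hsq : M^2 + m^2 > 4*(p^4+q^4) := by
      have := hpar d hd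
      rw [hnsd' d hd] at this
      nlinarith [this, hSigma]
    have hc1 : 0 ≤ (M^2 - 4*p^4) * (m^2 - 4*p^4) := by
      apply mul_nonneg <;> nlinarith [hM2, hm2, hMn, hmn]
    nlinarith [hc1, hMm, hsq, pow_pos hp 4, sq_nonneg (M*m - 4*p^2*q^2)]
  -- choose the branch
  obtain ⟨e, he, hbig⟩ : ∃ e : ℂ, e^2 = a^2 - 4*(p:ℂ)^2*(q:ℂ)^2 ∧
      2*q^2 < ‖a+e‖ := by
    rcases hdisj with h | h
    · exact ⟨d, hd, h⟩
    · exact ⟨-d, by rw [neg_sq]; exact hd, by rw [← sub_eq_add_neg]; exact h⟩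
  -- the two roots
  set z₁ : ℂ := (e - a)/(2*(p:ℂ)^2) with hz₁
  set z₄ : ℂ := -(a + e)/(2*(p:ℂ)^2) with hz₄
  have habs2p : ‖(2*(p:ℂ)^2)‖ = 2*p^2 := by
    have : (2*(p:ℂ)^2) = Complex.ofReal (2*p^2) := by push_cast; ring
    rw [this, Complex.norm_real, Real.norm_eq_abs]
    exact abs_of_nonneg (by positivity)
  have hprodE : ‖a+e‖ * ‖a-e‖ = 4*p^2*q^2 := hprod e he
  have habsEpos : 0 < ‖a+e‖ := lt_trans (by positivity) hbig
  have hsmall : ‖a-e‖ < 2*p^2 := by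
    by_contra hc
    push_neg at hc
    have h4 := mul_le_mul_of_nonneg_left hc habsEpos.le
    have h5 := mul_lt_mul_of_pos_right hbig (show (0:ℝ) < 2*p^2 by positivity)
    nlinarith [h4, h5, hprodE]
  have habs1 : ‖z₁‖ < 1 := by
    rw [hz₁, norm_div, habs2p]
    rw [div_lt_one (by positivity)]
    calc ‖e - a‖ = ‖a - e‖ := by
          rw [show e - a = -(a - e) from by ring, norm_neg]
    _ < 2*p^2 := hsmall
  have habs4 : 1 < ‖z₄‖ := by
    rw [hz₄, norm_div, habs2p, norm_neg]
    rw [lt_div_iff₀ (by positivity)]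
    nlinarith [hbig, sq_nonneg (q-p), mul_pos hp hq]
  -- quadratic root facts
  have hg1 : (p:ℂ)^2*z₁^2 + a*z₁ + (q:ℂ)^2 = 0 := by
    rw [hz₁]; field_simp
    linear_combination he
  have hg4 : (p:ℂ)^2*z₄^2 + a*z₄ + (q:ℂ)^2 = 0 := by
    rw [hz₄]; field_simp
    linear_combination he
  have hgfact : ∀ z : ℂ, (p:ℂ)^2*z^2 + a*z + (q:ℂ)^2 = (p:ℂ)^2 * (z - z₁) * (z - z₄) := by
    intro z
    rw [hz₁, hz₄]; field_simp
    ring_nf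
    linear_combination he
  have hhfact : ∀ z : ℂ, (p:ℂ)^2*z^2 + (starRingEnd ℂ) a * z + (q:ℂ)^2 =
      (p:ℂ)^2 * (z - (starRingEnd ℂ) z₁) * (z - (starRingEnd ℂ) z₄) := by
    intro z
    have h := congrArg (starRingEnd ℂ) (hgfact ((starRingEnd ℂ) z))
    simpa [map_add, map_mul, map_sub, map_pow, Complex.conj_conj, Complex.conj_ofReal] using h
  -- main iff
  have hiff : ∀ z : ℂ, Q z = 0 ↔
      z = z₁ ∨ z = (starRingEnd ℂ) z₁ ∨ z = z₄ ∨ z = (starRingEnd ℂ) z₄ := by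
    intro z
    rw [hfact z, hgfact z, hhfact z, mul_eq_zero, mul_eq_zero, mul_eq_zero, mul_eq_zero,
      mul_eq_zero]
    have hp2 : (p:ℂ)^2 ≠ 0 := pow_ne_zero _ hpC
    simp only [hp2, false_or, sub_eq_zero]
    tauto
  -- imaginary parts nonzero
  have him : ∀ w : ℂ, (p:ℂ)^2*w^2 + a*w + (q:ℂ)^2 = 0 → w.im ≠ 0 := by
    intro w hw h0
    have hi := congrArg Complex.im hw
    have hr := congrArg Complex.re hw
    simp only [Complex.add_im, Complex.add_re, Complex.mul_im, Complex.mul_re,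
      Complex.ofReal_im, Complex.ofReal_re, pow_two, Complex.zero_im, Complex.zero_re,
      hare, haim, h0] at hi hr
    have hwre : w.re = 0 := by
      have h' : Real.sqrt 3 * w.re = 0 := by linarith [hi]
      rcases mul_eq_zero.1 h' with h'' | h''
      · exact absurd h'' (ne_of_gt hs3pos)
      · exact h''
    rw [hwre] at hr
    nlinarith [hr, mul_pos hq hq]
  refine ⟨⟨z₁, z₄, him z₁ hg1, him z₄ hg4, ?_, ?_, hiff⟩, ?_⟩
  · exact habs1
  · exact habs4
  · intro z hz hQz
    rw [hiff z] at hQz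
    have hcn : ∀ w : ℂ, ‖(starRingEnd ℂ) w‖ = ‖w‖ := fun w => by
      rw [Complex.norm_conj]
    rcases hQz with rfl | rfl | rfl | rfl
    · exact absurd hz (ne_of_lt habs1)
    · rw [hcn] at hz; exact absurd hz (ne_of_lt habs1)
    · exact absurd hz (ne_of_gt habs4)
    · rw [hcn] at hz; exact absurd hz (ne_of_gt habs4)
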